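/- For every digraph G with n vertices and m edges and every invader S with c invasive vertices, the characteristic polynomial χ(x) = det(x·I_{n+mc} − A_{S≻G}) of the invaded digraph satisfies, identically in x, χ_C(x)^n · χ(x) = χ_C(x)^m · det( x·χ_C(x)·I_n − (a_tt·χ_C(x) + p_tt(x))·D^out_G − (a_hh·χ_C(x) + p_hh(x))·D^in_G − (a_th·χ_C(x) + p_th(x))·A_G − (a_ht·χ_C(x) + p_ht(x))·A_Gᵀ ). -/

import Mathlib

open Matrix

noncomputable section
open scoped Classical

namespace InvasionStmt4

/-- The adjacency matrix of the digraph with edge set `E`, tail map `t` and head map `h`: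
`(A_G)_{uv}` is the number of edges `e` with `t e = u` and `h e = v`. -/
def adjOf {V E : Type*} [Fintype E] (t h : E → V) : Matrix V V ℂ :=
  Matrix.of fun u v => ((Finset.univ.filter fun e => t e = u ∧ h e = v).card : ℂ)

/-- The out-degree matrix: diagonal matrix of row sums. -/
def doutOf {V : Type*} [Fintype V] [DecidableEq V] (A : Matrix V V ℂ) : Matrix V V ℂ :=
  Matrix.diagonal fun u => ∑ v, A u v

/-- The in-degree matrix: diagonal matrix of column sums. -/
def dinOf {V : Type*} [Fintype V] [DecidableEq V] (A : Matrix V V ℂ) : Matrix V V ℂ :=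
  Matrix.diagonal fun v => ∑ u, A u v

/-- The adjacency matrix of the invaded digraph `S ≻ G`, where the invader `S` is given
by the data `a_tt, a_th, a_ht, a_hh`, row vectors `rt, rh`, column vectors `ct, ch`, and the
adjacency matrix `AC` of the subdigraph induced on the `c` invasive vertices. -/
def invadedAdj {V E : Type*} [Fintype V] [DecidableEq V] [Fintype E] [DecidableEq E]
    (t h : E → V) (c : ℕ) (att ath aht ahh : ℕ) (rt rh : Fin c → ℕ) (ct ch : Fin c → ℕ)
    (AC : Matrix (Fin c) (Fin c) ℕ) :
    Matrix (V ⊕ E × Fin c) (V ⊕ E × Fin c) ℂ :=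
  Matrix.of fun i j =>
    match i, j with
    | Sum.inl u, Sum.inl v =>
        ((att : ℂ) • doutOf (adjOf t h) + (ahh : ℂ) • dinOf (adjOf t h)
          + (ath : ℂ) • adjOf t h + (aht : ℂ) • (adjOf t h)ᵀ) u v
    | Sum.inl w, Sum.inr (e, j) =>
        (if w = t e then (rt j : ℂ) else 0) + (if w = h e then (rh j : ℂ) else 0)
    | Sum.inr (e, j), Sum.inl w =>
        (if w = t e then (ct j : ℂ) else 0) + (if w = h e then (ch j : ℂ) else 0)
    | Sum.inr (e, j), Sum.inr (e', j') => if e = e' then (AC j j' : ℂ) else 0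

/-- `χ_C(x) = det(x·I_c − A_C)`. -/
def chiC (c : ℕ) (AC : Matrix (Fin c) (Fin c) ℕ) (x : ℂ) : ℂ :=
  (x • (1 : Matrix (Fin c) (Fin c) ℂ) - AC.map (Nat.cast : ℕ → ℂ)).det

/-- `p_{vw}(x) = r_v · adj(x·I_c − A_C) · c_w`. -/
def pPoly (c : ℕ) (AC : Matrix (Fin c) (Fin c) ℕ) (r cv : Fin c → ℕ) (x : ℂ) : ℂ :=
  ∑ j, ∑ k, (r j : ℂ) *
    (x • (1 : Matrix (Fin c) (Fin c) ℂ) - AC.map (Nat.cast : ℕ → ℂ)).adjugate j k * (cv k : ℂ)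

end InvasionStmt4

open InvasionStmt4

namespace InvasionAux4

open InvasionStmt4

variable {V E : Type*} [Fintype V] [DecidableEq V] [Fintype E] [DecidableEq E]

section counts
variable (t h : E → V)

lemma count_tt (u w : V) :
    ∑ e, (if u = t e then (1:ℂ) else 0) * (if w = t e then (1:ℂ) else 0)
      = doutOf (adjOf t h) u w := by
  by_cases huw : u = w
  · subst huw
    simp only [doutOf, Matrix.diagonal_apply_eq, adjOf, Matrix.of_apply]
    rw [← Nat.cast_sum]
    have : ∀ e : E, (if u = t e then (1:ℂ) else 0) * (if u = t e then (1:ℂ) else 0)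
        = if u = t e then 1 else 0 := by intro e; by_cases hh : u = t e <;> simp [hh]
    simp only [this]
    rw [Finset.sum_boole]
    norm_cast
    rw [Finset.card_eq_sum_card_fiberwise (f := h) (t := Finset.univ) (fun e _ => Finset.mem_univ _)]
    apply Finset.sum_congr rfl
    intro v _
    congr 1
    ext e
    simp [Finset.mem_filter, eq_comm, and_comm]
  · have : ∀ e : E, (if u = t e then (1:ℂ) else 0) * (if w = t e then (1:ℂ) else 0) = 0 := by
      intro e
      by_cases h1 : u = t e
      · by_cases h2 : w = t e
        · exact absurd (h1.trans h2.symm) huw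
        · simp [h2]
      · simp [h1]
    simp [this, doutOf, Matrix.diagonal_apply_ne _ huw]

lemma count_th (u w : V) :
    ∑ e, (if u = t e then (1:ℂ) else 0) * (if w = h e then (1:ℂ) else 0)
      = adjOf t h u w := by
  have : ∀ e : E, (if u = t e then (1:ℂ) else 0) * (if w = h e then (1:ℂ) else 0)
      = if t e = u ∧ h e = w then 1 else 0 := by
    intro e; by_cases h1 : u = t e <;> by_cases h2 : w = h e <;>
      simp [h1, h2, eq_comm] <;> tauto
  simp only [this]
  rw [Finset.sum_boole]
  simp only [adjOf, Matrix.of_apply]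
  norm_cast
  exact Finset.card_nbij id (by intro e he; simpa using he) (by simp [Set.InjOn]) (by intro e he; simpa using he)

lemma count_ht (u w : V) :
    ∑ e, (if u = h e then (1:ℂ) else 0) * (if w = t e then (1:ℂ) else 0)
      = (adjOf t h)ᵀ u w := by
  have := count_th t h w u
  simp only [mul_comm] at this
  simpa [Matrix.transpose_apply] using this

lemma count_hh (u w : V) :
    ∑ e, (if u = h e then (1:ℂ) else 0) * (if w = h e then (1:ℂ) else 0)
      = dinOf (adjOf t h) u w := by
  by_cases huw : u = w
  · subst huw
    simp only [dinOf, Matrix.diagonal_apply_eq, adjOf, Matrix.of_apply]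
    rw [← Nat.cast_sum]
    have : ∀ e : E, (if u = h e then (1:ℂ) else 0) * (if u = h e then (1:ℂ) else 0)
        = if u = h e then 1 else 0 := by intro e; by_cases hh : u = h e <;> simp [hh]
    simp only [this]
    rw [Finset.sum_boole]
    norm_cast
    rw [Finset.card_eq_sum_card_fiberwise (f := t) (t := Finset.univ) (fun e _ => Finset.mem_univ _)]
    apply Finset.sum_congr rfl
    intro v _
    congr 1
    ext e
    simp [Finset.mem_filter, eq_comm, and_comm]
  · have : ∀ e : E, (if u = h e then (1:ℂ) else 0) * (if w = h e then (1:ℂ) else 0) = 0 := by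
      intro e
      by_cases h1 : u = h e
      · by_cases h2 : w = h e
        · exact absurd (h1.trans h2.symm) huw
        · simp [h2]
      · simp [h1]
    simp [this, dinOf, Matrix.diagonal_apply_ne _ huw]

end counts

section blocks
variable (c : ℕ)

def Dblk (X : Matrix (Fin c) (Fin c) ℂ) : Matrix (E × Fin c) (E × Fin c) ℂ :=
  Matrix.of fun p q => if p.1 = q.1 then X p.2 q.2 else 0

lemma Dblk_det (X : Matrix (Fin c) (Fin c) ℂ) :
    (Dblk (E := E) c X).det = X.det ^ Fintype.card E := by
  have : Dblk (E := E) c X =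
      (Matrix.blockDiagonal fun _ : E => X).submatrix
        (Equiv.prodComm E (Fin c)) (Equiv.prodComm E (Fin c)) := by
    ext ⟨e, j⟩ ⟨f, k⟩
    simp [Dblk, Matrix.blockDiagonal_apply, eq_comm]
  rw [this, Matrix.det_submatrix_equiv_self, Matrix.det_blockDiagonal]
  simp [Finset.prod_const]

lemma Dblk_mul (X Y : Matrix (Fin c) (Fin c) ℂ) :
    Dblk (E := E) c X * Dblk (E := E) c Y = Dblk (E := E) c (X * Y) := by
  ext ⟨e, j⟩ ⟨f, k⟩
  simp only [Matrix.mul_apply, Dblk, Matrix.of_apply, Fintype.sum_prod_type]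
  rw [Finset.sum_comm]
  simp [Finset.sum_ite_eq, ite_and, Finset.mul_sum, mul_ite, ite_mul]

lemma Dblk_one : Dblk (E := E) c (1 : Matrix (Fin c) (Fin c) ℂ) = 1 := by
  ext ⟨e, j⟩ ⟨f, k⟩
  simp [Dblk, Matrix.one_apply, Prod.ext_iff, ite_and]

lemma Dblk_smul (a : ℂ) (X : Matrix (Fin c) (Fin c) ℂ) :
    Dblk (E := E) c (a • X) = a • Dblk (E := E) c X := by
  ext ⟨e, j⟩ ⟨f, k⟩
  simp [Dblk, mul_ite]

end blocks

section bec
variable (t h : E → V) (c : ℕ) (rt rh ct ch : Fin c → ℕ)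

def Bblk : Matrix V (E × Fin c) ℂ :=
  Matrix.of fun u p =>
    (if u = t p.1 then (rt p.2 : ℂ) else 0) + (if u = h p.1 then (rh p.2 : ℂ) else 0)

def Cblk : Matrix (E × Fin c) V ℂ :=
  Matrix.of fun p w =>
    (if w = t p.1 then (ct p.2 : ℂ) else 0) + (if w = h p.1 then (ch p.2 : ℂ) else 0)

lemma BEC_entry (Y : Matrix (Fin c) (Fin c) ℂ) (u w : V) :
    (Bblk t h c rt rh * Dblk (E := E) c Y * Cblk t h c ct ch) u w =
      ∑ e : E, ∑ j, ∑ k,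
        ((if u = t e then (rt j : ℂ) else 0) + (if u = h e then (rh j : ℂ) else 0)) * Y j k *
        ((if w = t e then (ct k : ℂ) else 0) + (if w = h e then (ch k : ℂ) else 0)) := by
  simp only [Matrix.mul_apply, Fintype.sum_prod_type, Dblk, Bblk, Cblk, Matrix.of_apply,
    Finset.sum_mul, Finset.mul_sum, mul_ite, ite_mul, zero_mul, mul_zero]
  apply Finset.sum_congr rfl; intro e _
  simp only [Finset.sum_ite_irrel, Finset.sum_const_zero, Finset.sum_ite_eq', Finset.mem_univ,
    if_true]
  rw [Finset.sum_comm]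

lemma one_term (Y : Matrix (Fin c) (Fin c) ℂ) (r cv : Fin c → ℕ) (p q : E → V) (u w : V) :
    (∑ e : E, ∑ j, ∑ k,
        (if u = p e then (r j : ℂ) else 0) * Y j k * (if w = q e then (cv k : ℂ) else 0)) =
      (∑ e : E, (if u = p e then (1:ℂ) else 0) * (if w = q e then (1:ℂ) else 0)) *
        (∑ j, ∑ k, (r j : ℂ) * Y j k * (cv k : ℂ)) := by
  rw [Finset.sum_mul]
  apply Finset.sum_congr rfl; intro e _
  by_cases h1 : u = p e <;> by_cases h2 : w = q e <;> simp [h1, h2]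

lemma BEC_eval (Y : Matrix (Fin c) (Fin c) ℂ) (u w : V) :
    (Bblk t h c rt rh * Dblk (E := E) c Y * Cblk t h c ct ch) u w =
      doutOf (adjOf t h) u w * (∑ j, ∑ k, (rt j : ℂ) * Y j k * (ct k : ℂ))
      + adjOf t h u w * (∑ j, ∑ k, (rt j : ℂ) * Y j k * (ch k : ℂ))
      + (adjOf t h)ᵀ u w * (∑ j, ∑ k, (rh j : ℂ) * Y j k * (ct k : ℂ))
      + dinOf (adjOf t h) u w * (∑ j, ∑ k, (rh j : ℂ) * Y j k * (ch k : ℂ)) := by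
  rw [BEC_entry]
  simp only [add_mul, mul_add, Finset.sum_add_distrib]
  rw [one_term c Y rt ct t t, one_term c Y rh ct h t, one_term c Y rt ch t h, one_term c Y rh ch h h,
    count_tt t h, count_th t h, count_ht t h, count_hh t h]
  ring

end bec

end InvasionAux4


open InvasionAux4

theorem stmt_main {V E : Type*} [Fintype V] [DecidableEq V] [Fintype E] [DecidableEq E]
    (t h : E → V) (c : ℕ) (att ath aht ahh : ℕ) (rt rh : Fin c → ℕ) (ct ch : Fin c → ℕ)
    (AC : Matrix (Fin c) (Fin c) ℕ) (x : ℂ) (hx : chiC c AC x ≠ 0) :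
    chiC c AC x ^ Fintype.card V *
        (x • (1 : Matrix (V ⊕ E × Fin c) (V ⊕ E × Fin c) ℂ)
          - invadedAdj t h c att ath aht ahh rt rh ct ch AC).det =
      chiC c AC x ^ Fintype.card E *
        ((x * chiC c AC x) • (1 : Matrix V V ℂ)
          - ((att : ℂ) * chiC c AC x + pPoly c AC rt ct x) • doutOf (adjOf t h)
          - ((ahh : ℂ) * chiC c AC x + pPoly c AC rh ch x) • dinOf (adjOf t h)
          - ((ath : ℂ) * chiC c AC x + pPoly c AC rt ch x) • adjOf t h
          - ((aht : ℂ) * chiC c AC x + pPoly c AC rh ct x) • (adjOf t h)ᵀ).det := by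
  classical
  set X : Matrix (Fin c) (Fin c) ℂ :=
    x • (1 : Matrix (Fin c) (Fin c) ℂ) - AC.map (Nat.cast : ℕ → ℂ) with hXdef
  have hchi : chiC c AC x = X.det := rfl
  have hdet : X.det ≠ 0 := hx
  have hXinv : X * X⁻¹ = 1 := Matrix.mul_nonsing_inv X (isUnit_iff_ne_zero.mpr hdet)
  have hD : Dblk (E := E) c X * Dblk (E := E) c X⁻¹ = 1 := by
    rw [Dblk_mul, hXinv, Dblk_one]
  haveI : Invertible (Dblk (E := E) c X) := invertibleOfRightInverse _ _ hD
  have hinvOf : ⅟(Dblk (E := E) c X) = Dblk (E := E) c X⁻¹ := invOf_eq_right_inv hD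
  set Ablk : Matrix V V ℂ :=
    x • (1 : Matrix V V ℂ) - ((att : ℂ) • doutOf (adjOf t h) + (ahh : ℂ) • dinOf (adjOf t h)
      + (ath : ℂ) • adjOf t h + (aht : ℂ) • (adjOf t h)ᵀ) with hAdef
  have hdecomp : x • (1 : Matrix (V ⊕ E × Fin c) (V ⊕ E × Fin c) ℂ)
      - invadedAdj t h c att ath aht ahh rt rh ct ch AC
      = Matrix.fromBlocks Ablk (-(Bblk t h c rt rh)) (-(Cblk t h c ct ch))
          (Dblk (E := E) c X) := by
    ext i j
    rcases i with u | ⟨e, j'⟩ <;> rcases j with v | ⟨f, k⟩ <;>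
      simp only [Matrix.sub_apply, Matrix.smul_apply, Matrix.one_apply, invadedAdj,
        Matrix.fromBlocks, Matrix.of_apply, Sum.elim_inl, Sum.elim_inr, Bblk, Cblk, Dblk,
        Matrix.neg_apply, hAdef, Sum.inl.injEq, Sum.inr.injEq, smul_eq_mul, reduceCtorEq,
        if_false, mul_zero, zero_sub, neg_add_rev, Matrix.add_apply]
    by_cases hef : e = f
    · subst hef
      by_cases hjk : j' = k <;>
        simp [hjk, hXdef, Matrix.sub_apply, Matrix.smul_apply, Matrix.one_apply,
          Prod.ext_iff, Matrix.map_apply]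
    · simp [hef, Prod.ext_iff]
  set N : Matrix V V ℂ :=
    Bblk t h c rt rh * Dblk (E := E) c (X.adjugate) * Cblk t h c ct ch with hNdef
  have hBEC : Bblk t h c rt rh * Dblk (E := E) c X⁻¹ * Cblk t h c ct ch
      = (X.det)⁻¹ • N := by
    rw [hNdef]
    have : X⁻¹ = (X.det)⁻¹ • X.adjugate := by
      rw [Matrix.inv_def, Ring.inverse_eq_inv']
    rw [this, Dblk_smul, Matrix.mul_smul, Matrix.smul_mul]
  have hkey : X.det • (Ablk - Bblk t h c rt rh * Dblk (E := E) c X⁻¹ * Cblk t h c ct ch)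
      = (x * chiC c AC x) • (1 : Matrix V V ℂ)
          - ((att : ℂ) * chiC c AC x + pPoly c AC rt ct x) • doutOf (adjOf t h)
          - ((ahh : ℂ) * chiC c AC x + pPoly c AC rh ch x) • dinOf (adjOf t h)
          - ((ath : ℂ) * chiC c AC x + pPoly c AC rt ch x) • adjOf t h
          - ((aht : ℂ) * chiC c AC x + pPoly c AC rh ct x) • (adjOf t h)ᵀ := by
    rw [hBEC, smul_sub, smul_smul, mul_inv_cancel₀ hdet, one_smul]
    ext u w
    have hN : N u w =
        doutOf (adjOf t h) u w * pPoly c AC rt ct x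
        + adjOf t h u w * pPoly c AC rt ch x
        + (adjOf t h)ᵀ u w * pPoly c AC rh ct x
        + dinOf (adjOf t h) u w * pPoly c AC rh ch x := by
      rw [hNdef, BEC_eval]; rfl
    simp only [Matrix.sub_apply, Matrix.smul_apply, Matrix.add_apply, smul_eq_mul, hN, hAdef,
      hchi]
    ring
  -- putting it together
  have hdetkey := congrArg Matrix.det hkey
  rw [Matrix.det_smul] at hdetkey
  rw [hdecomp, Matrix.det_fromBlocks₂₂, hinvOf, Dblk_det]
  have hneg : Ablk - -Bblk t h c rt rh * Dblk (E := E) c X⁻¹ * -Cblk t h c ct ch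
      = Ablk - Bblk t h c rt rh * Dblk (E := E) c X⁻¹ * Cblk t h c ct ch := by
    rw [Matrix.neg_mul, Matrix.mul_neg, Matrix.neg_mul, neg_neg]
  rw [hneg, ← hdetkey, hchi]
  ring

lemma chiC_dense (c : ℕ) (AC : Matrix (Fin c) (Fin c) ℕ) :
    Dense {y : ℂ | chiC c AC y ≠ 0} := by
  set M : Matrix (Fin c) (Fin c) ℂ := AC.map (Nat.cast : ℕ → ℂ)
  have hfin : Set.Finite {y : ℂ | chiC c AC y = 0} := by
    have hsub : {y : ℂ | chiC c AC y = 0} ⊆ {y : ℂ | (M.charpoly).IsRoot y} := by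
      intro y hy
      have heq : chiC c AC y = (M.charpoly).eval y := by
        unfold chiC
        rw [Matrix.charpoly, ← Polynomial.coe_evalRingHom, RingHom.map_det]
        congr 1; ext i j
        by_cases hij : i = j <;>
          simp [chiC, hij, Matrix.charmatrix_apply_eq, Matrix.charmatrix_apply_ne,
            Matrix.one_apply, M, Matrix.map_apply]
      simpa [Polynomial.IsRoot, ← heq] using hy
    exact (Polynomial.finite_setOf_isRoot (M.charpoly_monic).ne_zero).subset hsub
  have := (hfin.countable).dense_compl ℂ
  convert this using 1
  ext y; simp

lemma chiC_continuous (c : ℕ) (AC : Matrix (Fin c) (Fin c) ℕ) :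
    Continuous fun y : ℂ => chiC c AC y := by
  apply Continuous.matrix_det
  exact (continuous_id.smul continuous_const).sub continuous_const

lemma pPoly_continuous (c : ℕ) (AC : Matrix (Fin c) (Fin c) ℕ) (r cv : Fin c → ℕ) :
    Continuous fun y : ℂ => pPoly c AC r cv y := by
  unfold pPoly
  apply continuous_finset_sum; intro j _
  apply continuous_finset_sum; intro k _
  have hadj : Continuous fun y : ℂ =>
      (y • (1 : Matrix (Fin c) (Fin c) ℂ) - AC.map (Nat.cast : ℕ → ℂ)).adjugate := by
    apply Continuous.matrix_adjugate
    exact (continuous_id.smul continuous_const).sub continuous_const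
  exact (continuous_const.mul (hadj.matrix_elem j k)).mul continuous_const

/-- The characteristic polynomial of an invaded digraph. -/
theorem stmt_4 {V E : Type*} [Fintype V] [DecidableEq V] [Fintype E] [DecidableEq E]
    (t h : E → V) (c : ℕ) (att ath aht ahh : ℕ) (rt rh : Fin c → ℕ) (ct ch : Fin c → ℕ)
    (AC : Matrix (Fin c) (Fin c) ℕ) (x : ℂ) :
    chiC c AC x ^ Fintype.card V *
        (x • (1 : Matrix (V ⊕ E × Fin c) (V ⊕ E × Fin c) ℂ)
          - invadedAdj t h c att ath aht ahh rt rh ct ch AC).det =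
      chiC c AC x ^ Fintype.card E *
        ((x * chiC c AC x) • (1 : Matrix V V ℂ)
          - ((att : ℂ) * chiC c AC x + pPoly c AC rt ct x) • doutOf (adjOf t h)
          - ((ahh : ℂ) * chiC c AC x + pPoly c AC rh ch x) • dinOf (adjOf t h)
          - ((ath : ℂ) * chiC c AC x + pPoly c AC rt ch x) • adjOf t h
          - ((aht : ℂ) * chiC c AC x + pPoly c AC rh ct x) • (adjOf t h)ᵀ).det := by
  have hdense := chiC_dense c AC
  have hmain := fun y (hy : chiC c AC y ≠ 0) =>
    stmt_main t h c att ath aht ahh rt rh ct ch AC y hy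
  have hc1 : Continuous fun y : ℂ => chiC c AC y ^ Fintype.card V *
      (y • (1 : Matrix (V ⊕ E × Fin c) (V ⊕ E × Fin c) ℂ)
        - invadedAdj t h c att ath aht ahh rt rh ct ch AC).det := by
    apply Continuous.mul ((chiC_continuous c AC).pow _)
    apply Continuous.matrix_det
    exact (continuous_id.smul continuous_const).sub continuous_const
  have hc2 : Continuous fun y : ℂ => chiC c AC y ^ Fintype.card E *
      ((y * chiC c AC y) • (1 : Matrix V V ℂ)
        - ((att : ℂ) * chiC c AC y + pPoly c AC rt ct y) • doutOf (adjOf t h)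
        - ((ahh : ℂ) * chiC c AC y + pPoly c AC rh ch y) • dinOf (adjOf t h)
        - ((ath : ℂ) * chiC c AC y + pPoly c AC rt ch y) • adjOf t h
        - ((aht : ℂ) * chiC c AC y + pPoly c AC rh ct y) • (adjOf t h)ᵀ).det := by
    apply Continuous.mul ((chiC_continuous c AC).pow _)
    apply Continuous.matrix_det
    refine Continuous.sub (Continuous.sub (Continuous.sub (Continuous.sub ?_ ?_) ?_) ?_) ?_
    · exact (continuous_id.mul (chiC_continuous c AC)).smul continuous_const
    · exact ((continuous_const.mul (chiC_continuous c AC)).add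
        (pPoly_continuous c AC rt ct)).smul continuous_const
    · exact ((continuous_const.mul (chiC_continuous c AC)).add
        (pPoly_continuous c AC rh ch)).smul continuous_const
    · exact ((continuous_const.mul (chiC_continuous c AC)).add
        (pPoly_continuous c AC rt ch)).smul continuous_const
    · exact ((continuous_const.mul (chiC_continuous c AC)).add
        (pPoly_continuous c AC rh ct)).smul continuous_const
  exact congrFun (Continuous.ext_on hdense hc1 hc2 hmain) x
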